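/- A digitally connected digital manifold with boundary can have a digitally disconnected interior: the digital image M = ([0,4]_ℤ × [0,4]_ℤ) \ {(2,2)} ⊆ ℤ² with the 4-adjacency is digitally 4-connected and is a digital 2-manifold with boundary, its interior is int(M) = {(1,1), (1,3), (3,1), (3,3)} (the points of M having exactly four 4-neighbors in M), and int(M) is not digitally 4-connected (its four points are pairwise non-4-adjacent). -/

import Mathlib

/-- `κ_l`-adjacency on `ℤⁿ`: two distinct points are `κ_l`-adjacent if they differ
by at most `1` in every coordinate and differ in at most `l` coordinates. -/
def adjK (l n : ℕ) (x y : Fin n → ℤ) : Prop :=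
  x ≠ y ∧ (∀ k, |x k - y k| ≤ 1) ∧
    (Finset.univ.filter fun k => x k ≠ y k).card ≤ l

/-- the 2-adjacency on `ℤ` -/
def adj2 (x y : ℤ) : Prop := |x - y| = 1

/-- the 4-adjacency on `ℤ²` -/
def adj4 (x y : ℤ × ℤ) : Prop := |x.1 - y.1| + |x.2 - y.2| = 1

/-- the 8-adjacency on `ℤ²` -/
def adj8 (x y : ℤ × ℤ) : Prop := x ≠ y ∧ |x.1 - y.1| ≤ 1 ∧ |x.2 - y.2| ≤ 1

/-- the 6-adjacency on `ℤ³` -/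
def adj6 (x y : ℤ × ℤ × ℤ) : Prop :=
  |x.1 - y.1| + |x.2.1 - y.2.1| + |x.2.2 - y.2.2| = 1

/-- the digital neighborhood of `m` taken within `M`: the points of `M` that are
`r`-adjacent to `m` -/
def Nbhd {X : Type*} (r : X → X → Prop) (M : Set X) (m : X) : Set X :=
  {p ∈ M | r m p}

/-- a digital isomorphism between the digital images `(A, rX)` and `(B, rY)`:
a bijection preserving and reflecting adjacency -/
def DigIso {X Y : Type*} (rX : X → X → Prop) (A : Set X)
    (rY : Y → Y → Prop) (B : Set Y) : Prop :=
  ∃ α : A ≃ B, ∀ x y : A, rX x.1 y.1 ↔ rY (α x).1 (α y).1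

/-- `D₊ⁿ`, the points of `ℤⁿ` with all coordinates nonnegative -/
def Dplus (n : ℕ) : Set (Fin n → ℤ) := {x | ∀ k, 0 ≤ x k}

/-- `m` has a chart into `(ℤⁿ, κ₁)`: its digital neighborhood within `M` is digitally
isomorphic to the digital neighborhood of some point `s` taken in `(ℤⁿ, κ₁)` -/
def ChartZ {X : Type*} (r : X → X → Prop) (M : Set X) (m : X) (n : ℕ) : Prop :=
  ∃ s : Fin n → ℤ, DigIso r (Nbhd r M m) (adjK 1 n) (Nbhd (adjK 1 n) Set.univ s)

/-- `m` has a chart into `(D₊ⁿ, κ₁)` -/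
def ChartD {X : Type*} (r : X → X → Prop) (M : Set X) (m : X) (n : ℕ) : Prop :=
  ∃ s ∈ Dplus n, DigIso r (Nbhd r M m) (adjK 1 n) (Nbhd (adjK 1 n) (Dplus n) s)

/-- `(M, r)` is a digital `n`-manifold (without boundary): `n` is the least
nonnegative integer such that every point has a chart into `(ℤⁿ, κ₁)` -/
def IsDigManifold {X : Type*} (r : X → X → Prop) (M : Set X) (n : ℕ) : Prop :=
  (∀ m ∈ M, ChartZ r M m n) ∧ ∀ k < n, ¬ ∀ m ∈ M, ChartZ r M m k

/-- `(M, r)` is a digital `n`-manifold with boundary: `n` is the least nonnegative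
integer such that every point has a chart into `(ℤⁿ, κ₁)` or into `(D₊ⁿ, κ₁)` -/
def IsDigManifoldBd {X : Type*} (r : X → X → Prop) (M : Set X) (n : ℕ) : Prop :=
  (∀ m ∈ M, ChartZ r M m n ∨ ChartD r M m n) ∧
    ∀ k < n, ¬ ∀ m ∈ M, ChartZ r M m k ∨ ChartD r M m k

/-- the interior of a digital `n`-manifold with boundary: the points admitting a
chart into `(ℤⁿ, κ₁)` -/
def dInterior {X : Type*} (r : X → X → Prop) (M : Set X) (n : ℕ) : Set X :=
  {m ∈ M | ChartZ r M m n}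

/-- the boundary of a digital `n`-manifold with boundary: the points of `M` not
admitting a chart into `(ℤⁿ, κ₁)` -/
def dBoundary {X : Type*} (r : X → X → Prop) (M : Set X) (n : ℕ) : Set X :=
  {m ∈ M | ¬ ChartZ r M m n}

/-- `S` is digitally connected w.r.t. adjacency `r`: any two points are joined by a
chain of points of `S` in which consecutive points are adjacent -/
def ConnOn {X : Type*} (r : X → X → Prop) (S : Set X) : Prop :=
  ∀ x ∈ S, ∀ y ∈ S,
    Relation.ReflTransGen (fun p q => p ∈ S ∧ q ∈ S ∧ r p q) x y

/-- the digital support of an integer-valued function -/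
def sp {A : Type*} (f : A → ℤ) : Set A := {p | f p ≠ 0}

open Classical in
/-- the digital Euler characteristic of a finite digital image: the alternating sum
`Σ (-1)^r α_r` where `α_r` is the number of `r`-dimensional simplices, i.e.
`(r+1)`-element subsets of `M` whose points are pairwise adjacent -/
noncomputable def eulerChar {X : Type*} (r : X → X → Prop) (M : Finset X) : ℤ :=
  ∑ k ∈ Finset.range M.card, (-1 : ℤ) ^ k *
    (((M.powersetCard (k + 1)).filter fun S => ∀ x ∈ S, ∀ y ∈ S, x ≠ y → r x y).card : ℤ)

/-- the digital image `M = ([0,4]_ℤ × [0,4]_ℤ) \ {(2,2)}` -/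
def M18 : Set (ℤ × ℤ) :=
  {p | 0 ≤ p.1 ∧ p.1 ≤ 4 ∧ 0 ≤ p.2 ∧ p.2 ≤ 4} \ {(2, 2)}


/-! ### auxiliary lemmas -/

instance adj4.dec (p q : ℤ × ℤ) : Decidable (adj4 p q) :=
  decidable_of_iff (|p.1 - q.1| + |p.2 - q.2| = 1) Iff.rfl

lemma adj4_iff {p q : ℤ × ℤ} :
    adj4 p q ↔ (q.1 = p.1 - 1 ∧ q.2 = p.2) ∨ (q.1 = p.1 + 1 ∧ q.2 = p.2) ∨
      (q.1 = p.1 ∧ q.2 = p.2 - 1) ∨ (q.1 = p.1 ∧ q.2 = p.2 + 1) := by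
  unfold adj4
  rcases abs_cases (p.1 - q.1) with ⟨e1, _⟩ | ⟨e1, _⟩ <;>
    rcases abs_cases (p.2 - q.2) with ⟨e2, _⟩ | ⟨e2, _⟩ <;> rw [e1, e2] <;> omega

lemma adj4_symm {p q : ℤ × ℤ} (h : adj4 p q) : adj4 q p := by
  rw [adj4_iff] at h ⊢; omega

lemma adj4_parity {p q : ℤ × ℤ} (h : adj4 p q) : (p.1 + p.2 + q.1 + q.2) % 2 = 1 := by
  rw [adj4_iff] at h; omega

lemma free4 {S : Set (ℤ × ℤ)} {m x y : ℤ × ℤ}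
    (hx : x ∈ Nbhd adj4 S m) (hy : y ∈ Nbhd adj4 S m) : ¬ adj4 x y := by
  intro h
  have h1 := adj4_parity hx.2
  have h2 := adj4_parity hy.2
  have h3 := adj4_parity h
  omega

/-- `M18` as an explicit finset -/
noncomputable def M18F : Finset (ℤ × ℤ) :=
  (Finset.Icc (0:ℤ) 4 ×ˢ Finset.Icc (0:ℤ) 4).erase (2,2)

lemma mem_M18F_iff {a b : ℤ} :
    (a, b) ∈ M18F ↔ (0 ≤ a ∧ a ≤ 4 ∧ 0 ≤ b ∧ b ≤ 4 ∧ ¬(a = 2 ∧ b = 2)) := by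
  simp [M18F, Finset.mem_erase, Finset.mem_product, Finset.mem_Icc, Prod.ext_iff]
  omega

lemma mem_M18_iff {a b : ℤ} :
    (a, b) ∈ M18 ↔ 0 ≤ a ∧ a ≤ 4 ∧ 0 ≤ b ∧ b ≤ 4 ∧ ¬(a = 2 ∧ b = 2) := by
  simp [M18, Prod.ext_iff]
  tauto

lemma M18_eq : M18 = ↑M18F := by
  ext ⟨a, b⟩
  rw [mem_M18_iff, Finset.mem_coe, mem_M18F_iff]

lemma nbhd_coe {F : Finset (ℤ × ℤ)} {m : ℤ × ℤ} :
    Nbhd adj4 (↑F) m = ↑(F.filter fun p => adj4 m p) := by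
  ext p; simp [Nbhd, and_comm]

lemma ncard_nbhd (m : ℤ × ℤ) :
    (Nbhd adj4 M18 m).ncard = (M18F.filter fun p => adj4 m p).card := by
  rw [M18_eq, nbhd_coe, Set.ncard_coe_finset]

lemma nbhd_M18_finite (m : ℤ × ℤ) : (Nbhd adj4 M18 m).Finite := by
  rw [M18_eq, nbhd_coe]; exact Finset.finite_toSet _


lemma adjK_odd {n : ℕ} {x y : Fin n → ℤ} (h : adjK 1 n x y) :
    (∑ k, x k - ∑ k, y k) % 2 = 1 := by
  obtain ⟨hne, hle, hcard⟩ := h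
  classical
  obtain ⟨k0, hk0⟩ := Function.ne_iff.mp hne
  have hne' : (Finset.univ.filter fun k => x k ≠ y k).Nonempty :=
    ⟨k0, by simpa using hk0⟩
  have hcard1 : (Finset.univ.filter fun k => x k ≠ y k).card = 1 := by
    have := Finset.card_pos.mpr hne'
    omega
  obtain ⟨a, ha⟩ := Finset.card_eq_one.mp hcard1
  have hsum : ∑ k, (x k - y k) = x a - y a := by
    rw [← Finset.sum_filter_of_ne (p := fun k => x k ≠ y k)
      (fun k _ hk => sub_ne_zero.mp hk), ha, Finset.sum_singleton]
  have hamem : a ∈ Finset.univ.filter fun k => x k ≠ y k := by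
    rw [ha]; exact Finset.mem_singleton_self a
  have hane : x a ≠ y a := (Finset.mem_filter.mp hamem).2
  have hlea := hle a
  rw [← Finset.sum_sub_distrib, hsum]
  have hz : x a - y a ≠ 0 := sub_ne_zero.mpr hane
  rcases abs_cases (x a - y a) with ⟨e, _⟩ | ⟨e, _⟩ <;> omega

lemma card_filter_fin2 {P : Fin 2 → Prop} [DecidablePred P] :
    (Finset.univ.filter P).card ≤ 1 ↔ ¬(P 0 ∧ P 1) := by
  constructor
  · rw [Finset.card_le_one]
    intro h hp
    have := h 0 (by simp [hp.1]) 1 (by simp [hp.2])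
    simp at this
  · intro h
    rw [Finset.card_le_one]
    intro a ha b hb
    simp only [Finset.mem_filter, Finset.mem_univ, true_and] at ha hb
    fin_cases a <;> fin_cases b <;> first | rfl | (exact absurd ⟨by assumption, by assumption⟩ h) | (exact absurd ⟨by assumption, by assumption⟩ h)

lemma adjK12_iff {x y : Fin 2 → ℤ} :
    adjK 1 2 x y ↔ (x 0 = y 0 ∧ |x 1 - y 1| = 1) ∨ (|x 0 - y 0| = 1 ∧ x 1 = y 1) := by
  unfold adjK
  classical
  rw [card_filter_fin2, Function.ne_iff]
  simp only [Fin.exists_fin_two, Fin.forall_fin_two]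
  rcases abs_cases (x 0 - y 0) with ⟨e1, _⟩ | ⟨e1, _⟩ <;>
    rcases abs_cases (x 1 - y 1) with ⟨e2, _⟩ | ⟨e2, _⟩ <;> rw [e1, e2] <;> omega

lemma adjK11_iff {x y : Fin 1 → ℤ} : adjK 1 1 x y ↔ |x 0 - y 0| = 1 := by
  unfold adjK
  have hc : (Finset.univ.filter fun k => x k ≠ y k).card ≤ 1 :=
    le_trans (Finset.card_filter_le _ _) (by simp)
  have hne : x ≠ y ↔ x 0 ≠ y 0 := by
    rw [Function.ne_iff]
    exact ⟨fun ⟨k, hk⟩ => by rwa [Subsingleton.elim 0 k], fun h => ⟨0, h⟩⟩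
  have hfa : (∀ k, |x k - y k| ≤ 1) ↔ |x 0 - y 0| ≤ 1 :=
    ⟨fun h => h 0, fun h k => by rwa [Subsingleton.elim k 0]⟩
  rw [hne, hfa]
  simp only [hc, and_true]
  rcases abs_cases (x 0 - y 0) with ⟨e1, _⟩ | ⟨e1, _⟩ <;> rw [e1] <;> omega

lemma adjK_add {l n : ℕ} (x y t : Fin n → ℤ) :
    adjK l n (x + t) (y + t) ↔ adjK l n x y := by
  unfold adjK
  classical
  have h1 : (x + t ≠ y + t) ↔ x ≠ y := by
    constructor
    · intro h he; exact h (by rw [he])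
    · intro h he; exact h (add_right_cancel he)
  have h2 : ∀ k, (x + t) k - (y + t) k = x k - y k := by intro k; simp
  have h3 : (Finset.univ.filter fun k => (x + t) k ≠ (y + t) k) =
      (Finset.univ.filter fun k => x k ≠ y k) := by
    apply Finset.filter_congr; intro k _
    simp only [Pi.add_apply, ne_eq, eq_iff_iff]
    constructor
    · intro h he; exact h (by rw [he])
    · intro h he; exact h (by omega)
  rw [h1, h3]
  constructor
  · rintro ⟨a, b, c⟩; exact ⟨a, fun k => by rw [← h2 k]; exact b k, c⟩
  · rintro ⟨a, b, c⟩; exact ⟨a, fun k => by rw [h2 k]; exact b k, c⟩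

lemma adjK_shift {n : ℕ} (s x : Fin n → ℤ) : adjK 1 n s x ↔ adjK 1 n 0 (x - s) := by
  have h := adjK_add (l := 1) (n := n) 0 (x - s) s
  rw [zero_add, sub_add_cancel] at h
  exact h

lemma nbhdZ2_zero :
    Nbhd (adjK 1 2) Set.univ (0 : Fin 2 → ℤ) =
      {![1, 0], ![-1, 0], ![0, 1], ![0, -1]} := by
  ext x
  simp only [Nbhd, Set.mem_univ, true_and, Set.mem_setOf_eq, adjK12_iff,
    Set.mem_insert_iff, Set.mem_singleton_iff]
  have hx : ∀ c d : ℤ, (x = ![c, d]) ↔ (x 0 = c ∧ x 1 = d) := by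
    intro c d
    rw [funext_iff, Fin.forall_fin_two]
    simp
  rw [hx, hx, hx, hx]
  simp only [Pi.zero_apply, zero_sub, abs_neg]
  rw [abs_eq (by norm_num : (0:ℤ) ≤ 1), abs_eq (by norm_num : (0:ℤ) ≤ 1)]
  omega

lemma nbhdZ2_zero_ncard : (Nbhd (adjK 1 2) Set.univ (0 : Fin 2 → ℤ)).ncard = 4 := by
  rw [nbhdZ2_zero,
    show ({![1, 0], ![-1, 0], ![0, 1], ![0, -1]} : Set (Fin 2 → ℤ)) =
      (↑({![1, 0], ![-1, 0], ![0, 1], ![0, -1]} : Finset (Fin 2 → ℤ))) by simp,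
    Set.ncard_coe_finset]
  decide

lemma nbhd_shift {n : ℕ} (s : Fin n → ℤ) :
    Nbhd (adjK 1 n) Set.univ s =
      (fun y => y + s) '' Nbhd (adjK 1 n) Set.univ (0 : Fin n → ℤ) := by
  ext x
  constructor
  · intro hx
    exact ⟨x - s, ⟨Set.mem_univ _, (adjK_shift s x).mp hx.2⟩, sub_add_cancel x s⟩
  · rintro ⟨y, hy, rfl⟩
    refine ⟨Set.mem_univ _, ?_⟩
    have h : adjK 1 n 0 (y + s - s) := by rw [add_sub_cancel_right]; exact hy.2
    exact (adjK_shift s (y + s)).mpr h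

lemma nbhdZ2_ncard (s : Fin 2 → ℤ) : (Nbhd (adjK 1 2) Set.univ s).ncard = 4 := by
  rw [nbhd_shift, Set.ncard_image_of_injective _ (add_left_injective s), nbhdZ2_zero_ncard]

lemma nbhdZ2_finite (s : Fin 2 → ℤ) : (Nbhd (adjK 1 2) Set.univ s).Finite := by
  rw [nbhd_shift]
  apply Set.Finite.image
  rw [nbhdZ2_zero]
  exact Set.toFinite _

lemma nbhdD2_corner :
    Nbhd (adjK 1 2) (Dplus 2) (0 : Fin 2 → ℤ) = {![1, 0], ![0, 1]} := by
  ext x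
  simp only [Nbhd, Set.mem_setOf_eq, adjK12_iff, Dplus, Set.mem_insert_iff,
    Set.mem_singleton_iff, Fin.forall_fin_two]
  have hx : ∀ c d : ℤ, (x = ![c, d]) ↔ (x 0 = c ∧ x 1 = d) := by
    intro c d
    rw [funext_iff, Fin.forall_fin_two]
    simp
  rw [hx, hx]
  simp only [Pi.zero_apply, zero_sub, abs_neg]
  rw [abs_eq (by norm_num : (0:ℤ) ≤ 1), abs_eq (by norm_num : (0:ℤ) ≤ 1)]
  omega

lemma nbhdD2_edge :
    Nbhd (adjK 1 2) (Dplus 2) ![0, 1] = {![0, 0], ![0, 2], ![1, 1]} := by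
  ext x
  simp only [Nbhd, Set.mem_setOf_eq, adjK12_iff, Dplus, Set.mem_insert_iff,
    Set.mem_singleton_iff, Fin.forall_fin_two]
  have hx : ∀ c d : ℤ, (x = ![c, d]) ↔ (x 0 = c ∧ x 1 = d) := by
    intro c d
    rw [funext_iff, Fin.forall_fin_two]
    simp
  rw [hx, hx, hx]
  simp only [Matrix.cons_val_zero, Matrix.cons_val_one, Matrix.head_cons]
  rw [abs_eq (by norm_num : (0:ℤ) ≤ 1), abs_eq (by norm_num : (0:ℤ) ≤ 1)]
  omega

lemma zero_mem_Dplus : (0 : Fin 2 → ℤ) ∈ Dplus 2 := fun k => le_refl 0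

lemma edge_mem_Dplus : (![0, 1] : Fin 2 → ℤ) ∈ Dplus 2 := by
  intro k
  fin_cases k <;> simp

lemma explicit_ncard2 : ({![0, 0], ![0, 2], ![1, 1]} : Set (Fin 2 → ℤ)).ncard = 3 := by
  rw [show ({![0, 0], ![0, 2], ![1, 1]} : Set (Fin 2 → ℤ)) =
      (↑({![0, 0], ![0, 2], ![1, 1]} : Finset (Fin 2 → ℤ))) by simp,
    Set.ncard_coe_finset]
  decide

lemma explicit_ncard3 : ({![1, 0], ![0, 1]} : Set (Fin 2 → ℤ)).ncard = 2 := by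
  rw [show ({![1, 0], ![0, 1]} : Set (Fin 2 → ℤ)) =
      (↑({![1, 0], ![0, 1]} : Finset (Fin 2 → ℤ))) by simp,
    Set.ncard_coe_finset]
  decide

lemma adjK0_empty {S : Set (Fin 0 → ℤ)} (s : Fin 0 → ℤ) :
    Nbhd (adjK 1 0) S s = ∅ := by
  ext x
  simp only [Nbhd, Set.mem_setOf_eq, Set.mem_empty_iff_false, iff_false, not_and]
  intro _
  rintro ⟨hne, -, -⟩
  exact hne (funext fun k => k.elim0)

lemma nbhdZ1_zero :
    Nbhd (adjK 1 1) Set.univ (0 : Fin 1 → ℤ) = {![1], ![-1]} := by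
  ext x
  simp only [Nbhd, Set.mem_univ, true_and, Set.mem_setOf_eq, adjK11_iff,
    Set.mem_insert_iff, Set.mem_singleton_iff]
  have hx : ∀ c : ℤ, (x = ![c]) ↔ (x 0 = c) := by
    intro c
    rw [funext_iff]
    constructor
    · intro h; simpa using h 0
    · intro h k; rw [Subsingleton.elim k 0]; simpa using h
  rw [hx, hx]
  simp only [Pi.zero_apply, zero_sub, abs_neg]
  rw [abs_eq (by norm_num : (0:ℤ) ≤ 1)]

lemma nbhdZ1_zero_ncard : (Nbhd (adjK 1 1) Set.univ (0 : Fin 1 → ℤ)).ncard = 2 := by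
  rw [nbhdZ1_zero,
    show ({![1], ![-1]} : Set (Fin 1 → ℤ)) = (↑({![1], ![-1]} : Finset (Fin 1 → ℤ))) by simp,
    Set.ncard_coe_finset]
  decide

lemma nbhdZ1_ncard (s : Fin 1 → ℤ) : (Nbhd (adjK 1 1) Set.univ s).ncard = 2 := by
  rw [nbhd_shift, Set.ncard_image_of_injective _ (add_left_injective s), nbhdZ1_zero_ncard]

lemma nbhdZ1_finite (s : Fin 1 → ℤ) : (Nbhd (adjK 1 1) Set.univ s).Finite := by
  rw [nbhd_shift]
  apply Set.Finite.image
  rw [nbhdZ1_zero]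
  exact Set.toFinite _

lemma nbhdD1_ncard_le (s : Fin 1 → ℤ) : (Nbhd (adjK 1 1) (Dplus 1) s).ncard ≤ 2 := by
  rw [← nbhdZ1_ncard s]
  exact Set.ncard_le_ncard (fun x hx => ⟨Set.mem_univ _, hx.2⟩) (nbhdZ1_finite s)

lemma freeK {n : ℕ} {S : Set (Fin n → ℤ)} {s x y : Fin n → ℤ}
    (hx : x ∈ Nbhd (adjK 1 n) S s) (hy : y ∈ Nbhd (adjK 1 n) S s) :
    ¬ adjK 1 n x y := by
  intro h
  have h1 := adjK_odd hx.2
  have h2 := adjK_odd hy.2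
  have h3 := adjK_odd h
  omega

lemma digIso_of_free {X Y : Type*} {rX : X → X → Prop} {A : Set X}
    {rY : Y → Y → Prop} {B : Set Y}
    (hA : ∀ x ∈ A, ∀ y ∈ A, ¬ rX x y) (hB : ∀ x ∈ B, ∀ y ∈ B, ¬ rY x y)
    (hfA : A.Finite) (hfB : B.Finite) (h : A.ncard = B.ncard) :
    DigIso rX A rY B := by
  have iA := hfA.fintype
  have iB := hfB.fintype
  have hc : Fintype.card A = Fintype.card B := by
    rw [← Nat.card_eq_fintype_card, ← Nat.card_eq_fintype_card,
      Nat.card_coe_set_eq, Nat.card_coe_set_eq, h]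
  refine ⟨Fintype.equivOfCardEq hc, fun x y => ?_⟩
  exact iff_of_false (hA _ x.2 _ y.2)
    (hB _ (Fintype.equivOfCardEq hc x).2 _ (Fintype.equivOfCardEq hc y).2)

lemma ncard_eq_of_digIso {X Y : Type*} {rX : X → X → Prop} {A : Set X}
    {rY : Y → Y → Prop} {B : Set Y} (h : DigIso rX A rY B) : A.ncard = B.ncard := by
  obtain ⟨e, -⟩ := h
  rw [← Nat.card_coe_set_eq, ← Nat.card_coe_set_eq]
  exact Nat.card_congr e

lemma chartZ4 {m : ℤ × ℤ} (h : (Nbhd adj4 M18 m).ncard = 4) : ChartZ adj4 M18 m 2 := by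
  refine ⟨0, digIso_of_free (fun x hx y hy => free4 hx hy) (fun x hx y hy => freeK hx hy)
    (nbhd_M18_finite m) (nbhdZ2_finite 0) ?_⟩
  rw [h, nbhdZ2_ncard]

lemma chartD3 {m : ℤ × ℤ} (h : (Nbhd adj4 M18 m).ncard = 3) : ChartD adj4 M18 m 2 := by
  refine ⟨![0, 1], edge_mem_Dplus,
    digIso_of_free (fun x hx y hy => free4 hx hy) (fun x hx y hy => freeK hx hy)
    (nbhd_M18_finite m) ?_ ?_⟩
  · rw [nbhdD2_edge]; exact Set.toFinite _
  · rw [h, nbhdD2_edge, explicit_ncard2]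

lemma chartD2 {m : ℤ × ℤ} (h : (Nbhd adj4 M18 m).ncard = 2) : ChartD adj4 M18 m 2 := by
  refine ⟨0, zero_mem_Dplus,
    digIso_of_free (fun x hx y hy => free4 hx hy) (fun x hx y hy => freeK hx hy)
    (nbhd_M18_finite m) ?_ ?_⟩
  · rw [nbhdD2_corner]; exact Set.toFinite _
  · rw [h, nbhdD2_corner, explicit_ncard3]

lemma R18_symm : Symmetric (fun p q => p ∈ M18 ∧ q ∈ M18 ∧ adj4 p q) := by
  rintro p q ⟨h1, h2, h3⟩
  exact ⟨h2, h1, adj4_symm h3⟩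

lemma toOrigin : ∀ n : ℕ, ∀ a b : ℤ, (a, b) ∈ M18 → a + b ≤ n →
    Relation.ReflTransGen (fun p q => p ∈ M18 ∧ q ∈ M18 ∧ adj4 p q) (a, b) (0, 0) := by
  intro n
  induction n with
  | zero =>
    intro a b hm hle
    obtain ⟨h1, h2, h3, h4, h5⟩ := mem_M18_iff.mp hm
    have ha : a = 0 := by omega
    have hb : b = 0 := by omega
    subst ha; subst hb
    exact Relation.ReflTransGen.refl
  | succ n ih =>
    intro a b hm hle
    obtain ⟨h1, h2, h3, h4, h5⟩ := mem_M18_iff.mp hm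
    by_cases h0 : a = 0
    · subst h0
      by_cases hb0 : b = 0
      · subst hb0; exact Relation.ReflTransGen.refl
      · have hm' : ((0 : ℤ), b - 1) ∈ M18 := mem_M18_iff.mpr (by omega)
        exact Relation.ReflTransGen.head
          ⟨hm, hm', adj4_iff.mpr (by simp)⟩
          (ih 0 (b - 1) hm' (by omega))
    · by_cases h32 : a = 3 ∧ b = 2
      · obtain ⟨rfl, rfl⟩ := h32
        have hm' : ((3 : ℤ), (1 : ℤ)) ∈ M18 := mem_M18_iff.mpr (by omega)
        exact Relation.ReflTransGen.head
          ⟨hm, hm', adj4_iff.mpr (by simp)⟩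
          (ih 3 1 hm' (by omega))
      · have hm' : (a - 1, b) ∈ M18 := mem_M18_iff.mpr (by omega)
        exact Relation.ReflTransGen.head
          ⟨hm, hm', adj4_iff.mpr (by simp)⟩
          (ih (a - 1) b hm' (by omega))

lemma connM18 : ConnOn adj4 M18 := by
  intro x hx y hy
  obtain ⟨a, b⟩ := x
  obtain ⟨c, d⟩ := y
  have h1 := toOrigin (a + b).toNat a b hx (by
    obtain ⟨u1, u2, u3, u4, u5⟩ := mem_M18_iff.mp hx; omega)
  have h2 := toOrigin (c + d).toNat c d hy (by
    obtain ⟨u1, u2, u3, u4, u5⟩ := mem_M18_iff.mp hy; omega)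
  exact h1.trans ((@Relation.ReflTransGen.stdSymm _ _ ⟨R18_symm⟩).symm _ _ h2)

lemma four_eq :
    {m ∈ M18 | (Nbhd adj4 M18 m).ncard = 4} =
      ({(1, 1), (1, 3), (3, 1), (3, 3)} : Set (ℤ × ℤ)) := by
  ext ⟨a, b⟩
  simp only [Set.mem_setOf_eq, Set.mem_insert_iff, Set.mem_singleton_iff, Prod.mk.injEq]
  constructor
  · rintro ⟨hm, hc⟩
    obtain ⟨h1, h2, h3, h4, h5⟩ := mem_M18_iff.mp hm
    rw [ncard_nbhd] at hc
    interval_cases a <;> interval_cases b <;>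
      first
        | (revert hc; decide)
        | (exfalso; exact h5 ⟨rfl, rfl⟩)
  · rintro (⟨rfl, rfl⟩ | ⟨rfl, rfl⟩ | ⟨rfl, rfl⟩ | ⟨rfl, rfl⟩) <;>
      exact ⟨mem_M18_iff.mpr (by omega), by rw [ncard_nbhd]; decide⟩

lemma manifoldM18 : IsDigManifoldBd adj4 M18 2 := by
  constructor
  · rintro ⟨a, b⟩ hm
    obtain ⟨h1, h2, h3, h4, h5⟩ := mem_M18_iff.mp hm
    interval_cases a <;> interval_cases b <;>
      first
        | exact Or.inl (chartZ4 (by rw [ncard_nbhd]; decide))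
        | exact Or.inr (chartD3 (by rw [ncard_nbhd]; decide))
        | exact Or.inr (chartD2 (by rw [ncard_nbhd]; decide))
        | (exfalso; exact h5 ⟨rfl, rfl⟩)
  · intro k hk hall
    have hmem : ((1 : ℤ), (1 : ℤ)) ∈ M18 := mem_M18_iff.mpr (by omega)
    have h4 : (Nbhd adj4 M18 ((1 : ℤ), (1 : ℤ))).ncard = 4 := by rw [ncard_nbhd]; decide
    interval_cases k
    · rcases hall (1, 1) hmem with ⟨s, hiso⟩ | ⟨s, -, hiso⟩ <;>
      · have hc := ncard_eq_of_digIso hiso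
        rw [adjK0_empty, Set.ncard_empty] at hc
        omega
    · rcases hall (1, 1) hmem with ⟨s, hiso⟩ | ⟨s, -, hiso⟩
      · have hc := ncard_eq_of_digIso hiso
        rw [nbhdZ1_ncard] at hc
        omega
      · have hc := ncard_eq_of_digIso hiso
        have hle := nbhdD1_ncard_le s
        omega

lemma interiorM18 :
    dInterior adj4 M18 2 = ({(1, 1), (1, 3), (3, 1), (3, 3)} : Set (ℤ × ℤ)) := by
  ext p
  constructor
  · rintro ⟨hm, s, hiso⟩
    have hc := ncard_eq_of_digIso hiso
    rw [nbhdZ2_ncard] at hc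
    have hp : p ∈ {m ∈ M18 | (Nbhd adj4 M18 m).ncard = 4} := ⟨hm, hc⟩
    rwa [four_eq] at hp
  · intro hp
    have hp' : p ∈ {m ∈ M18 | (Nbhd adj4 M18 m).ncard = 4} := by
      rw [four_eq]; exact hp
    exact ⟨hp'.1, chartZ4 hp'.2⟩

/-- `M = ([0,4]²_ℤ) \ {(2,2)}` with the 4-adjacency is digitally
4-connected and a digital 2-manifold with boundary, its interior is
`{(1,1),(1,3),(3,1),(3,3)}` (exactly the points with four 4-neighbors in `M`),
and this interior is not digitally 4-connected (its points are pairwise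
non-4-adjacent). -/
theorem stmt_18 :
    ConnOn adj4 M18 ∧
    IsDigManifoldBd adj4 M18 2 ∧
    dInterior adj4 M18 2 = {(1, 1), (1, 3), (3, 1), (3, 3)} ∧
    {m ∈ M18 | (Nbhd adj4 M18 m).ncard = 4} = {(1, 1), (1, 3), (3, 1), (3, 3)} ∧
    (∀ p ∈ ({(1, 1), (1, 3), (3, 1), (3, 3)} : Set (ℤ × ℤ)),
      ∀ q ∈ ({(1, 1), (1, 3), (3, 1), (3, 3)} : Set (ℤ × ℤ)), ¬ adj4 p q) ∧
    ¬ ConnOn adj4 ({(1, 1), (1, 3), (3, 1), (3, 3)} : Set (ℤ × ℤ)) := by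
  refine ⟨connM18, manifoldM18, interiorM18, four_eq, ?_, ?_⟩
  · intro p hp q hq
    simp only [Set.mem_insert_iff, Set.mem_singleton_iff] at hp hq
    rcases hp with rfl | rfl | rfl | rfl <;> rcases hq with rfl | rfl | rfl | rfl <;> decide
  · intro h
    have hch := h (1, 1) (Set.mem_insert _ _) (1, 3) (by simp)
    rcases Relation.ReflTransGen.cases_head hch with heq | ⟨c, ⟨-, hc, hadj⟩, -⟩
    · exact absurd heq (by decide)
    · simp only [Set.mem_insert_iff, Set.mem_singleton_iff] at hc
      rcases hc with rfl | rfl | rfl | rfl <;> exact absurd hadj (by decide)
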